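/- arXiv:2211.08616 — 2 statements merged into one kernel-verified Lean document; each statement's English description precedes it below -/
import Mathlib

section
/- Let K be a number field with class number one, let n ≥ 1, and let M be an n×n matrix over K with det M = 1 such that every coefficient of the characteristic polynomial of M lies in the ring of integers 𝓞_K. Then there exists an integer j > 0 such that every entry of M^j lies in 𝓞_K. -/
open Matrix NumberField

/-- Let `K` be a number field with class number one, `n ≥ 1`, and `M` an `n × n`
matrix over `K` with `det M = 1` whose characteristic polynomial has all of its
coefficients integral (i.e. lying in `𝓞 K`).  Then some positive power `M ^ j`
has all of its entries integral. -/
theorem exists_pow_integral_of_charpoly_integral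
    (K : Type*) [Field K] [NumberField K]
    (hclass : NumberField.classNumber K = 1)
    (n : ℕ) (hn : 1 ≤ n) (M : Matrix (Fin n) (Fin n) K)
    (hdet : M.det = 1)
    (hint : ∀ i, IsIntegral ℤ (M.charpoly.coeff i)) :
    ∃ j : ℕ, 0 < j ∧ ∀ a b, IsIntegral ℤ ((M ^ j) a b) := by
  classical
  set p := M.charpoly with hp
  -- basic facts about the characteristic polynomial
  have hdeg : p.natDegree = n := by
    rw [hp, Matrix.charpoly_natDegree_eq_dim, Fintype.card_fin]
  have h0 : ∑ i ∈ Finset.range (n + 1), p.coeff i • M ^ i = 0 := by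
    have := M.aeval_self_charpoly
    rwa [Polynomial.aeval_eq_sum_range, hdeg] at this
  have hCH : M ^ n = -∑ i ∈ Finset.range n, p.coeff i • M ^ i := by
    have h1 := h0
    rw [Finset.sum_range_succ] at h1
    have hmon : p.coeff n = 1 := by
      have := (Matrix.charpoly_monic M).coeff_natDegree
      rwa [← hp, hdeg] at this
    rw [hmon, one_smul] at h1
    linear_combination (norm := module) h1
  have hc0 : p.coeff 0 = (-1 : K) ^ n := by
    have := M.det_eq_sign_charpoly_coeff
    rw [hdet, Fintype.card_fin] at this
    have h2 : ((-1 : K) ^ n) * ((-1 : K) ^ n) = 1 := by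
      rw [← mul_pow]; norm_num
    linear_combination (-(-1:K)^n) * this - (p.coeff 0) * h2
  -- the `𝓞 K`-span of the powers `M ^ i`, `i < n`
  set S : Submodule (𝓞 K) (Matrix (Fin n) (Fin n) K) :=
    Submodule.span (𝓞 K) (Set.range fun i : Fin n => M ^ (i : ℕ)) with hS
  have hSmem : ∀ i : ℕ, i < n → M ^ i ∈ S := fun i hi =>
    Submodule.subset_span ⟨⟨i, hi⟩, rfl⟩
  have hsmulS : ∀ (c : K), IsIntegral ℤ c → ∀ X ∈ S, c • X ∈ S := by
    intro c hc X hX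
    obtain ⟨r, hr⟩ := IsIntegralClosure.isIntegral_iff (A := 𝓞 K).mp hc
    rw [← hr, algebraMap_smul]
    exact S.smul_mem r hX
  have hpow : ∀ k : ℕ, M ^ k ∈ S := by
    intro k
    induction k using Nat.strong_induction_on with
    | _ k ih =>
      rcases lt_or_ge k n with hk | hk
      · exact hSmem k hk
      · have hke : M ^ k = -∑ i ∈ Finset.range n, p.coeff i • M ^ (k - n + i) := by
          calc M ^ k = M ^ (k - n) * M ^ n := by rw [← pow_add, Nat.sub_add_cancel hk]
          _ = _ := by
              rw [hCH, mul_neg, Finset.mul_sum]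
              congr 1
              exact Finset.sum_congr rfl fun i hi => by rw [mul_smul_comm, ← pow_add]
        rw [hke]
        refine neg_mem (Submodule.sum_mem _ fun i hi => ?_)
        have hi' := Finset.mem_range.mp hi
        exact hsmulS _ (hint i) _ (ih _ (by omega))
  have hmulpow : ∀ (k : ℕ) (Y), Y ∈ S → M ^ k * Y ∈ S := by
    intro k Y hY
    induction hY using Submodule.span_induction with
    | mem x hx =>
        obtain ⟨i, rfl⟩ := hx
        rw [← pow_add]; exact hpow _
    | zero => rw [mul_zero]; exact S.zero_mem
    | add x y hx hy ihx ihy => rw [mul_add]; exact S.add_mem ihx ihy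
    | smul r x hx ihx => rw [mul_smul_comm]; exact S.smul_mem r ihx
  have hmulS : ∀ (X), X ∈ S → ∀ (Y), Y ∈ S → X * Y ∈ S := by
    intro X hX
    induction hX using Submodule.span_induction with
    | mem x hx => obtain ⟨i, rfl⟩ := hx; exact hmulpow _
    | zero => intro Y hY; rw [zero_mul]; exact S.zero_mem
    | add x y hx hy ihx ihy =>
        intro Y hY; rw [add_mul]; exact S.add_mem (ihx Y hY) (ihy Y hY)
    | smul r x hx ihx =>
        intro Y hY; rw [smul_mul_assoc]; exact S.smul_mem r (ihx Y hY)
  -- the inverse of `M`, given by Cayley–Hamilton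
  set s : K := (-1) ^ (n + 1) with hs
  set B : Matrix (Fin n) (Fin n) K :=
    ∑ i ∈ Finset.range n, (s * p.coeff (i + 1)) • M ^ i with hB
  have hsint : IsIntegral ℤ s := by
    rw [hs]
    exact ((isIntegral_one (R := ℤ) (B := K)).neg).pow (n + 1)
  have hBS : B ∈ S := by
    refine Submodule.sum_mem _ fun i hi => ?_
    exact hsmulS _ (hsint.mul (hint (i + 1))) _ (hSmem i (Finset.mem_range.mp hi))
  have hMB : M * B = 1 := by
    have hsum : ∑ i ∈ Finset.range n, p.coeff (i + 1) • M ^ (i + 1) = -(p.coeff 0 • M ^ 0) := by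
      have := Finset.sum_range_succ' (fun i => p.coeff i • M ^ i) n
      rw [h0] at this
      linear_combination (norm := module) -this
    calc M * B = ∑ i ∈ Finset.range n, (s * p.coeff (i + 1)) • M ^ (i + 1) := by
          rw [hB, Finset.mul_sum]
          exact Finset.sum_congr rfl fun i _ => by
            rw [mul_smul_comm, ← pow_succ']
    _ = s • ∑ i ∈ Finset.range n, p.coeff (i + 1) • M ^ (i + 1) := by
          rw [Finset.smul_sum]
          exact Finset.sum_congr rfl fun i _ => by rw [smul_smul]
    _ = 1 := by
          rw [hsum, hc0]
          have : s • -(((-1 : K) ^ n) • (M ^ 0)) = (s * -((-1 : K) ^ n)) • (M ^ 0) := by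
            rw [smul_neg, smul_smul, mul_neg, neg_smul]
          rw [this]
          have h2 : s * -((-1 : K) ^ n) = 1 := by
            rw [hs, pow_succ]
            ring_nf
            rw [mul_comm, pow_mul]
            norm_num
          rw [h2, one_smul, pow_zero]
  have hcomm : Commute M B := by
    refine Commute.sum_right _ _ _ fun i _ => ?_
    exact ((Commute.refl M).pow_right i).smul_right _
  have hMBk : ∀ k : ℕ, M ^ k * B ^ k = 1 := by
    intro k
    induction k with
    | zero => simp
    | succ k ih =>
        calc M ^ (k + 1) * B ^ (k + 1) = M * (M ^ k * B ^ k) * B := by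
              rw [pow_succ' M, pow_succ B]; noncomm_ring
        _ = 1 := by rw [ih, mul_one, hMB]
  have hBpow : ∀ k : ℕ, B ^ k ∈ S := by
    intro k
    induction k with
    | zero => rw [pow_zero, ← pow_zero M]; exact hSmem 0 hn
    | succ k ih => rw [pow_succ]; exact hmulS _ ih _ hBS
  -- clearing denominators
  obtain ⟨e, he⟩ := IsLocalization.exist_integer_multiples (nonZeroDivisors (𝓞 K))
      Finset.univ (fun t : Fin n × Fin n × Fin n => (M ^ (t.1 : ℕ)) t.2.1 t.2.2)
  set eK : K := algebraMap (𝓞 K) K e with heK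
  have heK0 : eK ≠ 0 := by
    rw [heK]
    simpa using nonZeroDivisors.coe_ne_zero e
  have hES : ∀ (X), X ∈ S → ∀ a b, ∃ y : 𝓞 K, algebraMap (𝓞 K) K y = eK * X a b := by
    intro X hX
    induction hX using Submodule.span_induction with
    | mem x hx =>
        obtain ⟨i, rfl⟩ := hx
        intro a b
        obtain ⟨y, hy⟩ := he ⟨i, a, b⟩ (Finset.mem_univ _)
        refine ⟨y, ?_⟩
        rw [hy, Algebra.smul_def]
    | zero => exact fun a b => ⟨0, by simp⟩
    | add x y hx hy ihx ihy =>
        intro a b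
        obtain ⟨y1, hy1⟩ := ihx a b
        obtain ⟨y2, hy2⟩ := ihy a b
        exact ⟨y1 + y2, by rw [map_add, hy1, hy2, Matrix.add_apply, mul_add]⟩
    | smul r x hx ihx =>
        intro a b
        obtain ⟨y, hy⟩ := ihx a b
        refine ⟨r * y, ?_⟩
        rw [_root_.map_mul, hy, Matrix.smul_apply, Algebra.smul_def]
        ring
  choose E hE using fun k : ℕ => hES _ (hpow k)
  -- pigeonhole modulo `e ^ 2`
  set I : Ideal (𝓞 K) := Ideal.span {(e : 𝓞 K) ^ 2} with hI
  have hIbot : I ≠ ⊥ := by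
    rw [hI, Ne, Ideal.span_singleton_eq_bot]
    exact pow_ne_zero 2 (nonZeroDivisors.coe_ne_zero e)
  letI := @Fintype.ofFinite _ (Ideal.finiteQuotientOfFreeOfNeBot I hIbot)
  haveI : Finite (𝓞 K ⧸ I) := Finite.of_fintype _
  haveI : Finite (Fin n → Fin n → 𝓞 K ⧸ I) := Pi.finite
  obtain ⟨a, b, hab, hfab⟩ := Finite.exists_ne_map_eq_of_infinite
      (fun k : ℕ => fun x y : Fin n => Ideal.Quotient.mk I (E k x y))
  wlog hab' : a < b generalizing a b
  · exact this b a hab.symm hfab.symm (by omega)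
  -- `M ^ b - M ^ a = eK • C` with `C` having integral entries
  have hdiff : ∀ x y, ∃ t : 𝓞 K,
      (M ^ b) x y - (M ^ a) x y = eK * algebraMap (𝓞 K) K t := by
    intro x y
    have h1 : Ideal.Quotient.mk I (E b x y) = Ideal.Quotient.mk I (E a x y) := by
      have := congrFun (congrFun hfab x) y
      exact this.symm
    have h2 : E b x y - E a x y ∈ I := by
      exact Ideal.Quotient.eq.mp h1
    rw [hI, Ideal.mem_span_singleton'] at h2
    obtain ⟨t, ht⟩ := h2
    refine ⟨t, ?_⟩
    have h3 : algebraMap (𝓞 K) K (E b x y) - algebraMap (𝓞 K) K (E a x y)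
        = algebraMap (𝓞 K) K (t * (e : 𝓞 K) ^ 2) := by rw [← map_sub, ht]
    rw [hE b x y, hE a x y, _root_.map_mul, map_pow] at h3
    have h4 : eK * ((M ^ b) x y - (M ^ a) x y) = eK * (eK * algebraMap (𝓞 K) K t) := by
      rw [mul_sub, h3, ← heK]
      ring
    exact mul_left_cancel₀ heK0 h4
  -- conclusion
  refine ⟨b - a, by omega, fun x y => ?_⟩
  have hMj : M ^ (b - a) = 1 + (M ^ b - M ^ a) * B ^ a := by
    have h1 : M ^ b = M ^ (b - a) * M ^ a := by rw [← pow_add]; congr 1; omega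
    calc M ^ (b - a) = M ^ (b - a) * (M ^ a * B ^ a) := by rw [hMBk a, mul_one]
    _ = M ^ b * B ^ a := by rw [← mul_assoc, ← h1]
    _ = (M ^ a + (M ^ b - M ^ a)) * B ^ a := by rw [add_sub_cancel]
    _ = M ^ a * B ^ a + (M ^ b - M ^ a) * B ^ a := add_mul _ _ _
    _ = 1 + (M ^ b - M ^ a) * B ^ a := by rw [hMBk a]
  rw [hMj]
  have h1int : IsIntegral ℤ ((1 : Matrix (Fin n) (Fin n) K) x y) := by
    rw [Matrix.one_apply]
    split
    · exact isIntegral_one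
    · exact isIntegral_zero
  rw [Matrix.add_apply, Matrix.mul_apply]
  refine h1int.add (IsIntegral.sum _ fun z _ => ?_)
  obtain ⟨t, ht⟩ := hdiff x z
  obtain ⟨u, hu⟩ := hES _ (hBpow a) z y
  have : (M ^ b - M ^ a) x z * (B ^ a) z y
      = algebraMap (𝓞 K) K t * algebraMap (𝓞 K) K u := by
    rw [Matrix.sub_apply]
    linear_combination (B ^ a) z y * ht - algebraMap (𝓞 K) K t * hu
  rw [this]
  exact (RingOfIntegers.isIntegral_coe t).mul (RingOfIntegers.isIntegral_coe u)
end

section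
/- Let K be a number field with class number one, let n ≥ 1, and let M be an n×n matrix over K whose characteristic polynomial has all of its coefficients in the ring of integers 𝓞_K. Then there exists an invertible n×n matrix P over K such that every entry of P·M·P⁻¹ lies in 𝓞_K. -/
set_option maxHeartbeats 1000000


open Matrix NumberField

/-- Let `K` be a number field with class number one, `n ≥ 1`, and `M` an `n × n`
matrix over `K` whose characteristic polynomial has all of its coefficients in
`𝓞 K`.  Then `M` is conjugate over `K` to a matrix with integral entries. -/
theorem exists_conjugate_integral_of_charpoly_integral
    (K : Type*) [Field K] [NumberField K]
    (hclass : NumberField.classNumber K = 1)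
    (n : ℕ) (hn : 1 ≤ n) (M : Matrix (Fin n) (Fin n) K)
    (hint : ∀ i, IsIntegral ℤ (M.charpoly.coeff i)) :
    ∃ P : Matrix (Fin n) (Fin n) K, IsUnit P.det ∧
      ∀ a b, IsIntegral ℤ ((P * M * P⁻¹) a b) := by
  classical
  haveI hPID : IsPrincipalIdealRing (𝓞 K) := NumberField.classNumber_eq_one_iff.mp hclass
  set R := 𝓞 K with hR
  -- Cayley–Hamilton : `M ^ n` as a combination of lower powers
  have hCH : M ^ n = -∑ j ∈ Finset.range n, M.charpoly.coeff j • M ^ j := by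
    have h0 := M.aeval_self_charpoly
    rw [Polynomial.aeval_eq_sum_range, M.charpoly_natDegree_eq_dim, Fintype.card_fin,
      Finset.sum_range_succ] at h0
    have hc : M.charpoly.coeff n = 1 := by
      have hdeg : M.charpoly.natDegree = n := by
        rw [M.charpoly_natDegree_eq_dim, Fintype.card_fin]
      have h2 := M.charpoly_monic.coeff_natDegree
      rw [hdeg] at h2; exact h2
    rw [hc, one_smul] at h0
    linear_combination (norm := abel) h0
  -- the lattice
  set L : Submodule R (Fin n → K) :=
    Submodule.span R (Set.range fun p : Fin n × Fin n =>
      (M ^ (p.2 : ℕ)).mulVec (Pi.single p.1 1)) with hL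
  have hpow : ∀ (k : ℕ) (i : Fin n), (M ^ k).mulVec (Pi.single i 1) ∈ L := by
    intro k
    induction k using Nat.strong_induction_on with
    | _ k ih =>
      intro i
      rcases lt_or_ge k n with hk | hk
      · exact Submodule.subset_span ⟨(i, ⟨k, hk⟩), rfl⟩
      · have hsplit : M ^ k = M ^ (k - n) * M ^ n := by
          rw [← pow_add]; congr 1; omega
        have : M ^ k = -∑ j ∈ Finset.range n, M.charpoly.coeff j • M ^ (k - n + j) := by
          rw [hsplit, hCH, mul_neg, Finset.mul_sum]
          congr 1; apply Finset.sum_congr rfl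
          intro j _
          rw [mul_smul_comm, pow_add]
        have hsum : ∀ (s : Finset ℕ) (C : ℕ → Matrix (Fin n) (Fin n) K) (w : Fin n → K),
            (∑ j ∈ s, C j) *ᵥ w = ∑ j ∈ s, C j *ᵥ w := by
          intro s C w
          induction s using Finset.induction with
          | empty => simp [Matrix.zero_mulVec]
          | insert _ _ h ih => rw [Finset.sum_insert h, Finset.sum_insert h, Matrix.add_mulVec, ih]
        rw [this, Matrix.neg_mulVec]
        refine neg_mem (?_ : _ ∈ L)
        rw [hsum]
        refine Submodule.sum_mem _ fun j hj => ?_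
        rw [Matrix.smul_mulVec]
        have hji : k - n + j < k := by
          have := Finset.mem_range.mp hj; omega
        have hmem := ih _ hji i
        have : M.charpoly.coeff j • (M ^ (k - n + j)).mulVec (Pi.single i 1)
            = (⟨M.charpoly.coeff j, hint j⟩ : R) • (M ^ (k - n + j)).mulVec (Pi.single i 1) := by
          rw [← algebraMap_smul K (⟨M.charpoly.coeff j, hint j⟩ : R)]
          rfl
        rw [this]
        exact Submodule.smul_mem _ _ hmem
  -- invariance of the lattice
  have hinv : ∀ x ∈ L, M.mulVec x ∈ L := by
    intro x hx
    have hle : L ≤ L.comap ((Matrix.toLin' M).restrictScalars R) := by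
      rw [hL, Submodule.span_le]
      rintro _ ⟨⟨i, j⟩, rfl⟩
      simp only [SetLike.mem_coe, Submodule.mem_comap, LinearMap.coe_restrictScalars,
        Matrix.toLin'_apply]
      rw [Matrix.mulVec_mulVec, ← pow_succ']
      exact hpow _ i
    have := hle hx
    simpa only [Submodule.mem_comap, LinearMap.coe_restrictScalars, Matrix.toLin'_apply] using this
  -- L is finite and torsion-free, hence free
  haveI : Module.Finite R L := by
    rw [hL]; exact Module.Finite.span_of_finite R (Set.finite_range _)
  haveI : NoZeroSMulDivisors R (Fin n → K) := by
    refine ⟨fun {r x} h => ?_⟩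
    rcases eq_or_ne r 0 with h0 | h0
    · exact Or.inl h0
    right; funext i
    have hi : r • x i = 0 := congrFun h i
    rw [← algebraMap_smul K r (x i), smul_eq_mul, mul_eq_zero] at hi
    rcases hi with hi | hi
    · exact absurd (NumberField.RingOfIntegers.coe_injective (by simpa using hi)) h0
    · exact hi
  haveI : Module.Free R L := Module.free_of_finite_type_torsion_free'
  set ι := Module.Free.ChooseBasisIndex R L with hι
  set b0 : Module.Basis ι R L := Module.Free.chooseBasis R L with hb0
  set v : ι → (Fin n → K) := fun i => (b0 i : Fin n → K) with hv
  have hliR : LinearIndependent R v := b0.linearIndependent.map' L.subtype L.ker_subtype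
  have hli : LinearIndependent K v := (LinearIndependent.iff_fractionRing R K).mp hliR
  have hspanR : Submodule.span R (Set.range v) = L := by
    have : Set.range v = L.subtype '' Set.range b0 := by
      rw [← Set.range_comp]; rfl
    rw [this, ← Submodule.map_span, b0.span_eq, Submodule.map_subtype_top]
  have hsp : Submodule.span K (Set.range v) = ⊤ := by
    rw [eq_top_iff]
    have hLle : (L : Set (Fin n → K)) ⊆ (Submodule.span K (Set.range v) : Set (Fin n → K)) := by
      intro y hy
      have : y ∈ Submodule.span R (Set.range v) := by rw [hspanR]; exact hy
      exact Submodule.span_le_restrictScalars R K _ this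
    rw [← (Pi.basisFun K (Fin n)).span_eq, Submodule.span_le]
    rintro _ ⟨i, rfl⟩
    apply hLle
    have h0 := hpow 0 i
    rw [pow_zero, Matrix.one_mulVec] at h0
    rw [Pi.basisFun_apply]
    exact h0
  set B : Module.Basis ι K (Fin n → K) := Module.Basis.mk hli (by rw [hsp]) with hB
  have hcard : Fintype.card ι = n := by
    have h1 := Module.finrank_eq_card_basis B
    rw [Module.finrank_fin_fun] at h1
    exact h1.symm
  set e : ι ≃ Fin n := Fintype.equivFinOfCardEq hcard with he
  set b' : Module.Basis (Fin n) K (Fin n → K) := B.reindex e with hb'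
  set bR : Module.Basis (Fin n) R L := b0.reindex e with hbR
  have hbb : ∀ j, ((bR j : L) : Fin n → K) = b' j := by
    intro j
    rw [hb', hbR, Module.Basis.reindex_apply, Module.Basis.reindex_apply, hB, Module.Basis.mk_apply]
  set e₀ : Module.Basis (Fin n) K (Fin n → K) := Pi.basisFun K (Fin n) with he₀
  set P : Matrix (Fin n) (Fin n) K := b'.toMatrix e₀ with hP
  set Q : Matrix (Fin n) (Fin n) K := e₀.toMatrix b' with hQ
  have hPQ : P * Q = 1 := Module.Basis.toMatrix_mul_toMatrix_flip b' e₀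
  have hPdet : IsUnit P.det := by
    apply IsUnit.of_mul_eq_one Q.det
    rw [← Matrix.det_mul, hPQ, Matrix.det_one]
  have hPinv : P⁻¹ = Q := Matrix.inv_eq_right_inv hPQ
  have hM : LinearMap.toMatrix e₀ e₀ (Matrix.toLin' M) = M := by
    rw [he₀, LinearMap.toMatrix_eq_toMatrix', LinearMap.toMatrix'_toLin']
  have hconj : P * M * P⁻¹ = LinearMap.toMatrix b' b' (Matrix.toLin' M) := by
    rw [hPinv, hP, hQ]
    conv_lhs => rw [← hM]
    exact basis_toMatrix_mul_linearMap_toMatrix_mul_basis_toMatrix b' e₀ b' e₀ (Matrix.toLin' M)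
  refine ⟨P, hPdet, fun a b => ?_⟩
  rw [hconj, LinearMap.toMatrix_apply]
  have hmem : Matrix.toLin' M (b' b) ∈ L := by
    rw [Matrix.toLin'_apply, ← hbb b]
    exact hinv _ (bR b).2
  set x : L := ⟨Matrix.toLin' M (b' b), hmem⟩ with hx
  have hxsum : Matrix.toLin' M (b' b)
      = ∑ i, algebraMap R K (bR.repr x i) • b' i := by
    have h1 : ((∑ i, bR.repr x i • bR i : L) : Fin n → K) = Matrix.toLin' M (b' b) := by
      rw [bR.sum_repr x]
    rw [← h1]
    push_cast
    apply Finset.sum_congr rfl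
    intro i _
    rw [← hbb i, algebraMap_smul]
  rw [hxsum, Module.Basis.repr_sum_self]
  exact NumberField.RingOfIntegers.isIntegral_coe _
end
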